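/- Let R be a commutative ring with identity of characteristic 2 and let A be a symmetric m×m matrix over R. Then det A = Σ_σ Π_{i=1}^m a_{i,σ(i)}, where the sum ranges over all involutive permutations σ of {1,…,m} (i.e., permutations with σ = σ⁻¹). -/

import Mathlib

open Matrix

lemma aux_neg_one_eq_one (R : Type*) [CommRing R] [CharP R 2] : (-1 : R) = 1 := by
  have h2 : (2 : R) = 0 := by exact_mod_cast CharP.cast_eq_zero R 2
  linear_combination -h2

lemma aux_add_self (R : Type*) [CommRing R] [CharP R 2] (x : R) : x + x = 0 := by
  have h2 : (2 : R) = 0 := by exact_mod_cast CharP.cast_eq_zero R 2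
  linear_combination x * h2

/-- over a commutative ring of characteristic 2, the determinant of a
symmetric matrix equals the sum over all involutive permutations `σ` of the
products `∏ i, a_{i, σ(i)}`. -/
theorem stmt6 (R : Type*) [CommRing R] [CharP R 2] (m : ℕ)
    (A : Matrix (Fin m) (Fin m) R) (hA : Aᵀ = A) :
    A.det = ∑ σ ∈ Finset.univ.filter (fun σ : Equiv.Perm (Fin m) => σ * σ = 1),
      ∏ i, A i (σ i) := by
  have hsym : ∀ i j, A i j = A j i := fun i j => by
    conv_lhs => rw [← hA]
    exact Matrix.transpose_apply A i j
  have hdet : A.det = ∑ σ : Equiv.Perm (Fin m), ∏ i, A i (σ i) := by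
    rw [← Matrix.det_transpose A, Matrix.det_apply]
    refine Finset.sum_congr rfl fun σ _ => ?_
    have hsign : ((Equiv.Perm.sign σ : ℤ) : R) = 1 := by
      rcases Int.units_eq_one_or (Equiv.Perm.sign σ) with h | h <;> rw [h] <;>
        simp [aux_neg_one_eq_one R]
    rw [Units.smul_def, zsmul_eq_mul, hsign, one_mul]
    exact Finset.prod_congr rfl fun i _ => by rw [Matrix.transpose_apply]
  rw [hdet, ← Finset.sum_filter_add_sum_filter_not Finset.univ
    (fun σ : Equiv.Perm (Fin m) => σ * σ = 1)]
  have hprod : ∀ σ : Equiv.Perm (Fin m), ∏ i, A i (σ⁻¹ i) = ∏ i, A i (σ i) := by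
    intro σ
    have := Equiv.prod_comp σ⁻¹ (fun i => A (σ i) i)
    simp only [Equiv.Perm.inv_def, Equiv.apply_symm_apply] at this
    rw [Equiv.Perm.inv_def, this]
    exact Finset.prod_congr rfl fun i _ => hsym _ _
  have hzero : ∑ σ ∈ Finset.univ.filter
      (fun σ : Equiv.Perm (Fin m) => ¬ σ * σ = 1), ∏ i, A i (σ i) = 0 := by
    apply Finset.sum_involution (fun σ _ => σ⁻¹)
    · intro σ _
      rw [← hprod σ]
      exact aux_add_self R _
    · intro σ hσ _
      simp only [Finset.mem_filter] at hσ
      intro h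
      refine hσ.2 ?_
      calc σ * σ = σ * σ⁻¹ := by rw [h]
        _ = 1 := mul_inv_cancel σ
    · intro σ _
      exact inv_inv σ
    · intro σ hσ
      simp only [Finset.mem_filter, Finset.mem_univ, true_and] at hσ ⊢
      intro h
      refine hσ ?_
      calc σ * σ = (σ⁻¹ * σ⁻¹)⁻¹ := by rw [_root_.mul_inv_rev, inv_inv]
        _ = 1 := by rw [h, inv_one]
  rw [hzero, add_zero]
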